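/- If a basis (e_n) of a p-Banach space is C_sc-super-conservative, then it has the 2^{1/p}·C_sc-Property (W): for all n ∈ ℕ and all m ≥ n there exist a set A ⊂ {m+1, m+2, …} with |A| = n and signs ε such that h_r(n) ≤ 2^{1/p}·C_sc·‖1_{εA}‖, where h_r(n) = sup{‖1_{εB}‖ : |B| ≤ n, |ε| = 1}. -/

import Mathlib

/-- h_r(n) = sup{‖1_{εB}‖ : |B| ≤ n, |ε| = 1}. -/
noncomputable def hr {X : Type*} [AddCommGroup X] [Module ℝ X]
    (Nm : X → ℝ) (e : ℕ → X) (n : ℕ) : ℝ :=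
  sSup {x : ℝ | ∃ (B : Finset ℕ) (ε : ℕ → ℝ), B.card ≤ n ∧
    (∀ j ∈ B, 1 ≤ j) ∧ (∀ j ∈ B, |ε j| = 1) ∧
    x = Nm (∑ j ∈ B, ε j • e j)}

/-- a C_sc-super-conservative basis of a p-Banach space has the
2^{1/p}·C_sc-Property (W). -/
theorem stmt19 {X : Type*} [AddCommGroup X] [Module ℝ X]
    (Nm : X → ℝ) (p : ℝ) (hp0 : 0 < p) (hp1 : p ≤ 1)
    (hN0 : ∀ x, 0 ≤ Nm x)
    (hhom : ∀ (t : ℝ) (x : X), Nm (t • x) = |t| * Nm x)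
    (htri : ∀ x y : X, Nm (x + y) ^ p ≤ Nm x ^ p + Nm y ^ p)
    (e : ℕ → X)
    (hsn : ∃ c₁ c₂ : ℝ, 0 < c₁ ∧ ∀ n, c₁ ≤ Nm (e n) ∧ Nm (e n) ≤ c₂)
    (Csc : ℝ) (hCsc : 0 < Csc)
    (hsc : ∀ (A B : Finset ℕ) (ε δ : ℕ → ℝ),
      (∀ n ∈ A, 1 ≤ n) → (∀ n ∈ B, 1 ≤ n) → A.card ≤ B.card →
      (∀ a ∈ A, ∀ b ∈ B, a < b) →
      (∀ n ∈ A, |ε n| = 1) → (∀ n ∈ B, |δ n| = 1) →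
      Nm (∑ n ∈ A, ε n • e n) ≤ Csc * Nm (∑ n ∈ B, δ n • e n)) :
    ∀ n m : ℕ, n ≤ m →
      ∃ (A : Finset ℕ) (ε : ℕ → ℝ), A.card = n ∧ (∀ j ∈ A, m < j) ∧
        (∀ j ∈ A, |ε j| = 1) ∧
        hr Nm e n ≤ (2 : ℝ) ^ (1 / p) * Csc * Nm (∑ j ∈ A, ε j • e j) := by
  obtain ⟨c₁, c₂, hc₁, hc⟩ := hsn
  have hNm0 : Nm 0 = 0 := by
    have := hhom 0 0
    simpa using this
  intro n m hnm
  rcases Nat.eq_zero_or_pos n with hn | hn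
  · subst hn
    refine ⟨∅, fun _ => 1, rfl, by simp, by simp, ?_⟩
    simp only [Finset.sum_empty, hNm0, mul_zero]
    apply Real.sSup_le _ le_rfl
    rintro x ⟨B, ε, hB, -, -, rfl⟩
    have hB0 : B = ∅ := Finset.card_eq_zero.mp (Nat.le_zero.mp hB)
    simp [hB0, hNm0]
  -- main case: n ≥ 1
  have hm1 : 1 ≤ m := le_trans hn hnm
  -- bound on norms of sign-sums
  have hbound : ∀ (A : Finset ℕ) (ε : ℕ → ℝ), (∀ j ∈ A, |ε j| = 1) →
      Nm (∑ j ∈ A, ε j • e j) ^ p ≤ A.card * c₂ ^ p := by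
    intro A
    induction A using Finset.induction_on with
    | empty =>
      intro ε _
      simp [hNm0, Real.zero_rpow (ne_of_gt hp0)]
    | insert a A ha ih =>
      intro ε hε
      rw [Finset.sum_insert ha]
      have h1 : Nm (ε a • e a + ∑ j ∈ A, ε j • e j) ^ p
          ≤ Nm (ε a • e a) ^ p + Nm (∑ j ∈ A, ε j • e j) ^ p := htri _ _
      have h2 : Nm (ε a • e a) = Nm (e a) := by
        rw [hhom, hε a (Finset.mem_insert_self a A), one_mul]
      have h3 : Nm (e a) ^ p ≤ c₂ ^ p :=
        Real.rpow_le_rpow (hN0 _) (hc a).2 hp0.le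
      have h4 := ih ε (fun j hj => hε j (Finset.mem_insert_of_mem hj))
      rw [Finset.card_insert_of_notMem ha]
      push_cast
      rw [h2] at h1
      linarith
  have hc₂pos : 0 < c₂ := lt_of_lt_of_le hc₁ (le_trans (hc 0).1 (hc 0).2)
  -- the set of attainable values on sets beyond m of cardinality n
  set S : Set ℝ := {x : ℝ | ∃ (A : Finset ℕ) (ε : ℕ → ℝ), A.card = n ∧
      (∀ j ∈ A, m < j) ∧ (∀ j ∈ A, |ε j| = 1) ∧
      x = Nm (∑ j ∈ A, ε j • e j)} with hS
  have hSbdd : BddAbove S := by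
    refine ⟨((n : ℝ) * c₂ ^ p) ^ (1 / p), ?_⟩
    rintro x ⟨A, ε, hcard, -, hε, rfl⟩
    have hx : Nm (∑ j ∈ A, ε j • e j) ^ p ≤ (n : ℝ) * c₂ ^ p := by
      have := hbound A ε hε
      rw [hcard] at this
      exact this
    calc Nm (∑ j ∈ A, ε j • e j)
        = (Nm (∑ j ∈ A, ε j • e j) ^ p) ^ (1 / p) := by
          rw [← Real.rpow_mul (hN0 _), mul_one_div_cancel (ne_of_gt hp0),
            Real.rpow_one]
      _ ≤ ((n : ℝ) * c₂ ^ p) ^ (1 / p) :=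
          Real.rpow_le_rpow (Real.rpow_nonneg (hN0 _) p) hx (by positivity)
  have hA₀mem : ∀ (M : ℕ), m ≤ M → Nm (∑ j ∈ Finset.Ioc M (M + n), (1 : ℝ) • e j) ∈ S := by
    intro M hM
    refine ⟨Finset.Ioc M (M + n), fun _ => 1, by simp, ?_, fun _ _ => abs_one, rfl⟩
    intro j hj
    exact lt_of_le_of_lt hM (Finset.mem_Ioc.mp hj).1
  have hSne : S.Nonempty := ⟨_, hA₀mem m le_rfl⟩
  set u : ℝ := sSup S with hu
  -- u is positive
  have hupos : 0 < u := by
    have h1 : Nm (∑ j ∈ ({1} : Finset ℕ), (1 : ℝ) • e j)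
        ≤ Csc * Nm (∑ j ∈ Finset.Ioc m (m + n), (1 : ℝ) • e j) := by
      apply hsc
      · intro j hj; simp at hj; omega
      · intro j hj; have := (Finset.mem_Ioc.mp hj).1; omega
      · simp; omega
      · intro a ha b hb
        simp at ha
        have := (Finset.mem_Ioc.mp hb).1
        omega
      · intro j _; exact abs_one
      · intro j _; exact abs_one
    have h2 : Nm (∑ j ∈ Finset.Ioc m (m + n), (1 : ℝ) • e j) ≤ u :=
      le_csSup hSbdd (hA₀mem m le_rfl)
    have h3 : c₁ ≤ Nm (∑ j ∈ ({1} : Finset ℕ), (1 : ℝ) • e j) := by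
      simp only [Finset.sum_singleton, one_smul]
      exact (hc 1).1
    nlinarith
  -- every element of the hr-set is at most Csc * u
  have hkey : ∀ x ∈ {x : ℝ | ∃ (B : Finset ℕ) (ε : ℕ → ℝ), B.card ≤ n ∧
      (∀ j ∈ B, 1 ≤ j) ∧ (∀ j ∈ B, |ε j| = 1) ∧
      x = Nm (∑ j ∈ B, ε j • e j)}, x ≤ Csc * u := by
    rintro x ⟨B, δ, hBcard, hB1, hδ, rfl⟩
    set M : ℕ := m + B.sup id with hM
    have hMb : ∀ b ∈ B, b ≤ M := fun b hb =>
      le_trans (Finset.le_sup (f := id) hb) (Nat.le_add_left _ _)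
    have h1 : Nm (∑ j ∈ B, δ j • e j)
        ≤ Csc * Nm (∑ j ∈ Finset.Ioc M (M + n), (1 : ℝ) • e j) := by
      apply hsc
      · exact hB1
      · intro j hj; have := (Finset.mem_Ioc.mp hj).1; omega
      · simp; omega
      · intro a ha b hb
        have := hMb a ha
        have := (Finset.mem_Ioc.mp hb).1
        omega
      · exact hδ
      · intro j _; exact abs_one
    have h2 : Nm (∑ j ∈ Finset.Ioc M (M + n), (1 : ℝ) • e j) ≤ u :=
      le_csSup hSbdd (hA₀mem M (Nat.le_add_right _ _))
    nlinarith
  have hhr : hr Nm e n ≤ Csc * u := by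
    apply Real.sSup_le hkey
    positivity
  -- choose a near-optimal element of S
  have h2p : (0 : ℝ) < (2 : ℝ) ^ (1 / p) := Real.rpow_pos_of_pos two_pos _
  have hlt : u * (2 : ℝ) ^ (-(1 / p)) < u := by
    have h2 : (2 : ℝ) ^ (-(1 / p)) < 1 :=
      Real.rpow_lt_one_of_one_lt_of_neg one_lt_two (by
        have : 0 < 1 / p := by positivity
        linarith)
    nlinarith
  obtain ⟨v, hvS, hv⟩ := exists_lt_of_lt_csSup hSne hlt
  obtain ⟨A, ε, hcard, hAm, hε, hval⟩ := hvS
  refine ⟨A, ε, hcard, hAm, hε, ?_⟩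
  have hinv : (2 : ℝ) ^ (-(1 / p)) * (2 : ℝ) ^ (1 / p) = 1 := by
    rw [← Real.rpow_add two_pos]
    simp
  have huv : u < (2 : ℝ) ^ (1 / p) * v := by
    have := mul_lt_mul_of_pos_right hv h2p
    rw [mul_assoc, hinv, mul_one] at this
    linarith [mul_comm ((2 : ℝ) ^ (1 / p)) v]
  calc hr Nm e n ≤ Csc * u := hhr
    _ ≤ Csc * ((2 : ℝ) ^ (1 / p) * v) := by nlinarith
    _ = (2 : ℝ) ^ (1 / p) * Csc * Nm (∑ j ∈ A, ε j • e j) := by rw [← hval]; ring
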